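/- For every simulation campaign Ξ = (x₀, M₀, χ) for a simulator S there exists a simulation campaign Ξ' = (x₀', M₀', χ') in normal form (i.e., χ' consists only of load and run commands) such that the set of explored transitions coincides: T_{Ξ'} = T_Ξ. -/

import Mathlib

noncomputable section

/-- The discrete impulse `δ : ℝ → ℝ`, with `δ 0 = 1` and `δ t = 0` for `t ≠ 0`. -/
def dirac (t : ℝ) : ℝ := if t = 0 then 1 else 0

/-- `u : ℝ → ℝ` is a discrete event sequence over `U` (viewed as a function on `ℝ≥0`):
its values at nonnegative times lie in `U`, and it is nonzero at only finitely many
nonnegative times. -/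
def IsDiscreteEventSeq (U : Set ℝ) (u : ℝ → ℝ) : Prop :=
  (∀ t : ℝ, 0 ≤ t → u t ∈ U) ∧ {t : ℝ | 0 ≤ t ∧ u t ≠ 0}.Finite

/-- `(n, p, τ)` is an impulse decomposition of `u` over `U`:
`u t = p 0 • δ t + ∑ i = 1..n, p i • δ (t - ∑ k < i, τ k)` for all `t ≥ 0`,
where `p 0 ∈ U`, `p 1, …, p n ∈ U \ {0}` and the `τ k` (`k < n`) are positive. -/
def IsImpulseDecomp (U : Set ℝ) (u : ℝ → ℝ) (n : ℕ) (p τ : ℕ → ℝ) : Prop :=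
  (∀ i ≤ n, p i ∈ U) ∧ (∀ i, 1 ≤ i → i ≤ n → p i ≠ 0) ∧ (∀ k < n, 0 < τ k) ∧
  ∀ t : ℝ, 0 ≤ t →
    u t = p 0 * dirac t + ∑ i ∈ Finset.Icc 1 n, p i * dirac (t - ∑ k ∈ Finset.range i, τ k)

/-- A discrete event system (DES) `H = (X, U, Y, φ, ψ)`.  The transition map
`φ` takes a (nonnegative) time duration, a state, and an input signal
(a function `ℝ → ℝ`, thought of as acting on the time interval `[0, d)`),
and returns a state.  It satisfies:
* consistency: `φ 0 x u = x`;
* semigroup: running for `d₁ + d₂` along `ω` is the same as running for `d₁`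
  along `ω` and then for `d₂` along the left-shift of `ω` by `d₁`
  (i.e. along the second half of the concatenation);
* causality: `φ d x ω` only depends on the restriction of `ω` to `[0, d)`. -/
structure DES (X Y : Type*) (U : Set ℝ) where
  φ : ℝ → X → (ℝ → ℝ) → X
  ψ : ℝ → X → Y
  consistency : ∀ (x : X) (u : ℝ → ℝ), φ 0 x u = x
  semigroup : ∀ (d₁ d₂ : ℝ), 0 < d₁ → 0 < d₂ → ∀ (x : X) (ω : ℝ → ℝ),
      φ (d₁ + d₂) x ω = φ d₂ (φ d₁ x ω) (fun t => ω (t + d₁))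
  causal : ∀ (d : ℝ) (x : X) (ω ω' : ℝ → ℝ),
      (∀ t : ℝ, 0 ≤ t → t < d → ω t = ω' t) → φ d x ω = φ d x ω'

/-- Simulator commands. -/
inductive Cmd (X : Type*) where
  | load : X → Cmd X
  | store : Cmd X
  | free : X → Cmd X
  | run : ℝ → ℝ → Cmd X

/-- Well-formed command: the arguments of `run p τ` satisfy `p ∈ U` and `τ > 0`. -/
def Cmd.WF {X : Type*} (U : Set ℝ) : Cmd X → Prop
  | .run p τ => p ∈ U ∧ 0 < τ
  | _ => True

/-- A command is normal if it is a `load` or a `run`. -/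
def Cmd.IsNormal {X : Type*} : Cmd X → Prop
  | .load _ => True
  | .run _ _ => True
  | _ => False

variable {X Y : Type*} {U : Set ℝ}

open Classical in

/-- The transition function `ξ` of the simulator: one (partial) step on a
simulator state `(x, M)`, where `M` is the simulator memory. -/
def simStep (H : DES X Y U) : X × Set X → Cmd X → Option (X × Set X)
  | (_x, M), .load x' => if x' ∈ M then some (x', M) else none
  | (x, M), .free x' => if x' ∈ M then some (x, M \ {x'}) else none
  | (x, M), .store => some (x, M ∪ {x})
  | (x, M), .run p τ => some (H.φ τ x (fun t => p * dirac t), M)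

/-- The sequence of simulator states of the simulation campaign `(x₀, M₀, χ)`:
`stateAt H x₀ M₀ χ j` is the simulator state after executing the first `j`
commands of `χ` (if all of them are defined). -/
def stateAt (H : DES X Y U) (x₀ : X) (M₀ : Set X) (χ : List (Cmd X)) :
    ℕ → Option (X × Set X)
  | 0 => some (x₀, M₀)
  | j + 1 => (stateAt H x₀ M₀ χ j).bind fun s => (χ[j]?).bind (simStep H s)

/-- The set `T_Ξ` of transitions explored by the simulation campaign
`Ξ = (x₀, M₀, χ)`: all `(x, p, τ, x')` such that at some position `j` the
simulator state is `(x, M)`, the `j`-th command is `run p τ`, and the run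
leads to `x' = φ τ x (p·δ)`. -/
def campTrans (H : DES X Y U) (x₀ : X) (M₀ : Set X) (χ : List (Cmd X)) :
    Set (X × ℝ × ℝ × X) :=
  {q | ∃ (j : ℕ) (x : X) (M : Set X) (p τ : ℝ),
    stateAt H x₀ M₀ χ j = some (x, M) ∧ χ[j]? = some (.run p τ) ∧
    q = (x, p, τ, H.φ τ x (fun t => p * dirac t))}

lemma stateAt_succ (H : DES X Y U) (x₀ : X) (M₀ : Set X) (χ : List (Cmd X)) (j : ℕ) :
    stateAt H x₀ M₀ χ (j+1)
      = (stateAt H x₀ M₀ χ j).bind fun s => (χ[j]?).bind (simStep H s) := rfl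

lemma stateAt_cons (H : DES X Y U) (x₀ : X) (M₀ : Set X) (c : Cmd X) (χ : List (Cmd X))
    (j : ℕ) :
    stateAt H x₀ M₀ (c::χ) (j+1)
      = (simStep H (x₀, M₀) c).bind fun s => stateAt H s.1 s.2 χ j := by
  induction j with
  | zero =>
    cases h : simStep H (x₀, M₀) c <;> simp [stateAt, h]
  | succ j ih =>
    rw [stateAt_succ, ih]
    cases h : simStep H (x₀, M₀) c <;> simp [stateAt_succ, h]

lemma campTrans_nil (H : DES X Y U) (x : X) (M : Set X) :
    campTrans H x M ([] : List (Cmd X)) = ∅ := by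
  ext q
  simp [campTrans]

lemma campTrans_cons_not_run (H : DES X Y U) (x : X) (M : Set X) (c : Cmd X)
    (χ : List (Cmd X)) (s : X × Set X)
    (hc : ∀ p τ : ℝ, c ≠ .run p τ) (hs : simStep H (x, M) c = some s) :
    campTrans H x M (c::χ) = campTrans H s.1 s.2 χ := by
  ext q
  constructor
  · rintro ⟨j, x', M', p, τ, h1, h2, h3⟩
    cases j with
    | zero =>
      exact absurd (by simpa using h2) (hc p τ)
    | succ j =>
      rw [stateAt_cons, hs] at h1
      exact ⟨j, x', M', p, τ, h1, by simpa using h2, h3⟩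
  · rintro ⟨j, x', M', p, τ, h1, h2, h3⟩
    refine ⟨j+1, x', M', p, τ, ?_, by simpa using h2, h3⟩
    rw [stateAt_cons, hs]
    exact h1

lemma campTrans_cons_run (H : DES X Y U) (x : X) (M : Set X) (p τ : ℝ)
    (χ : List (Cmd X)) :
    campTrans H x M (.run p τ :: χ)
      = insert (x, p, τ, H.φ τ x (fun t => p * dirac t))
          (campTrans H (H.φ τ x (fun t => p * dirac t)) M χ) := by
  have hs : simStep H (x, M) (.run p τ) = some (H.φ τ x (fun t => p * dirac t), M) := rfl
  ext q
  constructor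
  · rintro ⟨j, x', M', p', τ', h1, h2, h3⟩
    cases j with
    | zero =>
      simp only [stateAt, Option.some_inj, Prod.mk.injEq] at h1
      simp only [List.getElem?_cons_zero, Option.some_inj, Cmd.run.injEq] at h2
      left
      rw [h3, h1.1, h2.1, h2.2]
    | succ j =>
      rw [stateAt_cons, hs] at h1
      exact Or.inr ⟨j, x', M', p', τ', h1, by simpa using h2, h3⟩
  · rintro (h | ⟨j, x', M', p', τ', h1, h2, h3⟩)
    · exact ⟨0, x, M, p, τ, rfl, by simp, h⟩
    · refine ⟨j+1, x', M', p', τ', ?_, by simpa using h2, h3⟩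
      rw [stateAt_cons, hs]
      exact h1

lemma campTrans_finite [Nonempty X] (H : DES X Y U) (x₀ : X) (M₀ : Set X)
    (χ : List (Cmd X)) : (campTrans H x₀ M₀ χ).Finite := by
  classical
  set g : ℕ → X × ℝ × ℝ × X := fun j =>
    match stateAt H x₀ M₀ χ j, χ[j]? with
    | some (x, _), some (.run p τ) => (x, p, τ, H.φ τ x (fun t => p * dirac t))
    | _, _ => (Classical.arbitrary X, 0, 0, Classical.arbitrary X) with hg
  refine Set.Finite.subset ((Set.finite_Iio χ.length).image g) ?_
  rintro q ⟨j, x, M, p, τ, h1, h2, h3⟩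
  refine ⟨j, ?_, ?_⟩
  · have := (List.getElem?_eq_some_iff).1 h2
    exact this.1
  · rw [hg]
    simp only [h1, h2]
    exact h3.symm

lemma normalizeCampaign (H : DES X Y U) (Ms : Set X) :
    ∀ (χ : List (Cmd X)) (x : X) (M : Set X),
      (stateAt H x M χ χ.length).isSome →
      (∀ c ∈ χ, c.WF U) →
      Prod.fst '' campTrans H x M χ ⊆ Ms →
      ∀ y : X, ∃ χ' : List (Cmd X),
        (∀ c ∈ χ', c.WF U) ∧ (∀ c ∈ χ', c.IsNormal) ∧
        (stateAt H y Ms χ' χ'.length).isSome ∧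
        campTrans H y Ms χ' = campTrans H x M χ := by
  intro χ
  induction χ with
  | nil =>
    intro x M _ _ _ y
    exact ⟨[], by simp, by simp, by simp [stateAt], by rw [campTrans_nil, campTrans_nil]⟩
  | cons c χ ih =>
    intro x M hvalid hwf hsub y
    -- from validity, the first step succeeds
    rw [List.length_cons, stateAt_cons] at hvalid
    obtain ⟨s, hs⟩ : ∃ s, simStep H (x, M) c = some s := by
      cases h : simStep H (x, M) c with
      | none => rw [h] at hvalid; simp at hvalid
      | some s => exact ⟨s, rfl⟩
    rw [hs] at hvalid
    rw [Option.bind_some] at hvalid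
    have hwf' : ∀ c' ∈ χ, c'.WF U := fun c' hc' => hwf c' (List.mem_cons_of_mem _ hc')
    match c with
    | .run p τ =>
      have hsrun : s = (H.φ τ x (fun t => p * dirac t), M) := by
        rw [show simStep H (x, M) (.run p τ)
              = some (H.φ τ x (fun t => p * dirac t), M) from rfl] at hs
        exact (Option.some_inj.1 hs).symm
      set x' := H.φ τ x (fun t => p * dirac t) with hx'
      have hct : campTrans H x M (.run p τ :: χ)
          = insert (x, p, τ, x') (campTrans H x' M χ) := campTrans_cons_run H x M p τ χ
      have hxMs : x ∈ Ms := hsub ⟨(x, p, τ, x'), by rw [hct]; exact Set.mem_insert _ _, rfl⟩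
      have hsub' : Prod.fst '' campTrans H x' M χ ⊆ Ms := by
        refine Set.Subset.trans (Set.image_mono ?_) hsub
        rw [hct]; exact Set.subset_insert _ _
      obtain ⟨χ', hwf1, hn1, hv1, he1⟩ := ih x' M (by rw [hsrun] at hvalid; exact hvalid)
        hwf' hsub' x'
      refine ⟨.load x :: .run p τ :: χ', ?_, ?_, ?_, ?_⟩
      · intro c' hc'
        simp only [List.mem_cons] at hc'
        rcases hc' with rfl | rfl | hc'
        · trivial
        · exact hwf _ (by simp)
        · exact hwf1 _ hc'
      · intro c' hc'
        simp only [List.mem_cons] at hc'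
        rcases hc' with rfl | rfl | hc'
        · trivial
        · trivial
        · exact hn1 _ hc'
      · have hload : simStep H (y, Ms) (.load x) = some (x, Ms) := by
          simp [simStep, hxMs]
        have hrun : simStep H (x, Ms) (.run p τ) = some (x', Ms) := rfl
        simp only [List.length_cons, stateAt_cons, hload, hrun, Option.bind_some]
        exact hv1
      · have hload : simStep H (y, Ms) (.load x) = some (x, Ms) := by
          simp [simStep, hxMs]
        have hrun : simStep H (x, Ms) (.run p τ) = some (x', Ms) := rfl
        rw [campTrans_cons_not_run H y Ms (.load x) _ (x, Ms) (by intro _ _ h; cases h) hload]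
        rw [campTrans_cons_run H x Ms p τ χ', ← hx', he1, hct]
    | .load z =>
      have hne : ∀ p τ : ℝ, (Cmd.load z : Cmd X) ≠ .run p τ := by intro _ _ h; cases h
      have hct := campTrans_cons_not_run H x M (.load z) χ s hne hs
      obtain ⟨χ', hwf1, hn1, hv1, he1⟩ := ih s.1 s.2 hvalid hwf'
        (by rw [← hct]; exact hsub) y
      exact ⟨χ', hwf1, hn1, hv1, by rw [he1, hct]⟩
    | .store =>
      have hne : ∀ p τ : ℝ, (Cmd.store : Cmd X) ≠ .run p τ := by intro _ _ h; cases h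
      have hct := campTrans_cons_not_run H x M .store χ s hne hs
      obtain ⟨χ', hwf1, hn1, hv1, he1⟩ := ih s.1 s.2 hvalid hwf'
        (by rw [← hct]; exact hsub) y
      exact ⟨χ', hwf1, hn1, hv1, by rw [he1, hct]⟩
    | .free z =>
      have hne : ∀ p τ : ℝ, (Cmd.free z : Cmd X) ≠ .run p τ := by intro _ _ h; cases h
      have hct := campTrans_cons_not_run H x M (.free z) χ s hne hs
      obtain ⟨χ', hwf1, hn1, hv1, he1⟩ := ih s.1 s.2 hvalid hwf'
        (by rw [← hct]; exact hsub) y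
      exact ⟨χ', hwf1, hn1, hv1, by rw [he1, hct]⟩

/-- **Normal form.** For every (valid, finite) simulation campaign `Ξ = (x₀, M₀, χ)`
for a simulator of `H`, there is a simulation campaign `Ξ' = (x₀', M₀', χ')` in
normal form (`χ'` consists only of `load` and `run` commands) exploring exactly
the same set of transitions: `T_{Ξ'} = T_Ξ`. -/
theorem exists_normal_form_campaign
    [Nonempty X] (H : DES X Y U) (hUfin : U.Finite) (hU0 : (0 : ℝ) ∈ U)
    (x₀ : X) (M₀ : Set X) (hM₀ : M₀.Finite) (χ : List (Cmd X))
    (hwf : ∀ c ∈ χ, c.WF U)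
    (hvalid : (stateAt H x₀ M₀ χ χ.length).isSome) :
    ∃ (x₀' : X) (M₀' : Set X) (χ' : List (Cmd X)),
      M₀'.Finite ∧ (∀ c ∈ χ', c.WF U) ∧ (∀ c ∈ χ', c.IsNormal) ∧
      (stateAt H x₀' M₀' χ' χ'.length).isSome ∧
      campTrans H x₀' M₀' χ' = campTrans H x₀ M₀ χ := by
  obtain ⟨χ', hwf1, hn1, hv1, he1⟩ :=
    normalizeCampaign H (Prod.fst '' campTrans H x₀ M₀ χ) χ x₀ M₀ hvalid hwf
      (Set.Subset.refl _) x₀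
  exact ⟨x₀, Prod.fst '' campTrans H x₀ M₀ χ, χ',
    (campTrans_finite H x₀ M₀ χ).image _, hwf1, hn1, hv1, he1⟩
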